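/- Let M_E be a partial nonnegative p×q matrix whose row i contains at most one observed entry (i,j), and assume that whenever m_{ij} ≠ 0 there exists some row k ≠ i with m_{kj} observed and nonzero. If the partial matrix obtained by deleting row i admits a completion of nonnegative rank at most r, then M_E admits a completion of nonnegative rank at most r. -/

import Mathlib

open Matrix

theorem stmt7 {p q r : ℕ} (E : Set (Fin p × Fin q)) (f : Fin p → Fin q → ℝ)
    (hf : ∀ e ∈ E, 0 ≤ f e.1 e.2) (i : Fin p) (j : Fin q)
    (hrow : ∀ l : Fin q, (i, l) ∈ E → l = j)
    (hcol : (i, j) ∈ E → f i j ≠ 0 → ∃ k : Fin p, k ≠ i ∧ (k, j) ∈ E ∧ f k j ≠ 0)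
    (hdel : ∃ N : Matrix {k : Fin p // k ≠ i} (Fin q) ℝ,
      (∃ (A : Matrix {k : Fin p // k ≠ i} (Fin r) ℝ) (B : Matrix (Fin r) (Fin q) ℝ),
        (∀ a b, 0 ≤ A a b) ∧ (∀ a b, 0 ≤ B a b) ∧ N = A * B) ∧
      ∀ (k : Fin p) (h : k ≠ i) (l : Fin q), (k, l) ∈ E → N ⟨k, h⟩ l = f k l) :
    ∃ M : Matrix (Fin p) (Fin q) ℝ,
      (∃ (A : Matrix (Fin p) (Fin r) ℝ) (B : Matrix (Fin r) (Fin q) ℝ),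
        (∀ a b, 0 ≤ A a b) ∧ (∀ a b, 0 ≤ B a b) ∧ M = A * B) ∧
      ∀ e ∈ E, M e.1 e.2 = f e.1 e.2 := by
  classical
  obtain ⟨N, ⟨A, B, hA, hB, hN⟩, hNE⟩ := hdel
  by_cases hij : (i, j) ∈ E ∧ f i j ≠ 0
  · obtain ⟨k, hk, hkE, hkj⟩ := hcol hij.1 hij.2
    set c : ℝ := f i j / f k j with hc
    have hc0 : 0 ≤ c := div_nonneg (hf _ hij.1) (hf _ hkE)
    set A' : Matrix (Fin p) (Fin r) ℝ :=
      fun x b => if h : x = i then c * A ⟨k, hk⟩ b else A ⟨x, h⟩ b with hA'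
    refine ⟨A' * B, ⟨A', B, ?_, hB, rfl⟩, ?_⟩
    · intro a b
      simp only [hA']
      split
      · exact mul_nonneg hc0 (hA _ _)
      · exact hA _ _
    · rintro ⟨x, l⟩ hxl
      by_cases hx : x = i
      · subst hx
        have hl : l = j := hrow l hxl
        subst hl
        have hrowval : ∀ m, (A' * B) x m = c * N ⟨k, hk⟩ m := by
          intro m
          rw [Matrix.mul_apply]
          simp [hN, Matrix.mul_apply, hA', Finset.mul_sum, mul_assoc]
        rw [hrowval, hNE k hk _ hkE, hc, div_mul_cancel₀ _ hkj]
      · have : (A' * B) x l = N ⟨x, hx⟩ l := by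
          rw [Matrix.mul_apply]
          simp only [hN, Matrix.mul_apply, hA', dif_neg hx]
        rw [this, hNE x hx l hxl]
  · set A' : Matrix (Fin p) (Fin r) ℝ :=
      fun x b => if h : x = i then 0 else A ⟨x, h⟩ b with hA'
    refine ⟨A' * B, ⟨A', B, ?_, hB, rfl⟩, ?_⟩
    · intro a b
      simp only [hA']
      split
      · exact le_refl 0
      · exact hA _ _
    · rintro ⟨x, l⟩ hxl
      by_cases hx : x = i
      · subst hx
        have hl : l = j := hrow l hxl
        subst hl
        have hfz : f x l = 0 := by
          by_contra h
          exact hij ⟨hxl, h⟩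
        have : (A' * B) x l = 0 := by
          rw [Matrix.mul_apply]
          simp [hN, Matrix.mul_apply, hA', dif_pos rfl]
        rw [this, hfz]
      · have : (A' * B) x l = N ⟨x, hx⟩ l := by
          rw [Matrix.mul_apply]
          simp only [hN, Matrix.mul_apply, hA', dif_neg hx]
        rw [this, hNE x hx l hxl]
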